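/- The composition law for modular chemical-potential factors holds: defining f(M;τ,z) = exp(iπ(c/(cτ+d))Q_L(z) − iπ(c/(cτ̄+d))Q_R(z)) and the induced actions τ_M = (aτ+b)/(cτ+d), z_{M,τ} = Q^{-1}((1/(cτ+d))Q_L − (1/(cτ̄+d))Q_R) z, one has f(M₁;τ,z)·f(M₂; τ_{M₁}, z_{M₁,τ}) = f(M₂M₁; τ, z) for M₁, M₂ ∈ SL(2,ℝ). -/

import Mathlib

open Matrix Complex

/-- Complexification of a real matrix. -/
noncomputable def cpx {n : ℕ} (A : Matrix (Fin n) (Fin n) ℝ) : Matrix (Fin n) (Fin n) ℂ :=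
  A.map (Complex.ofReal)

/-- The chemical-potential factor
`f(M;τ,z) = exp(iπ(c/(cτ+d)) Q_L(z) − iπ(c/(cτ̄+d)) Q_R(z))`,
with `Q_L = (H+Q)/2`, `Q_R = (H−Q)/2`. -/
noncomputable def chemFactor (n : ℕ) (Q H : Matrix (Fin n) (Fin n) ℝ)
    (M : Matrix (Fin 2) (Fin 2) ℝ) (τ : ℂ) (z : Fin n → ℂ) : ℂ :=
  Complex.exp ((Real.pi : ℂ) * Complex.I *
      (((M 1 0 : ℝ) : ℂ) / (((M 1 0 : ℝ) : ℂ) * τ + ((M 1 1 : ℝ) : ℂ))) *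
      (z ⬝ᵥ (cpx ((2⁻¹ : ℝ) • (H + Q)) *ᵥ z))
    - (Real.pi : ℂ) * Complex.I *
      (((M 1 0 : ℝ) : ℂ) / (((M 1 0 : ℝ) : ℂ) * (starRingEnd ℂ τ) + ((M 1 1 : ℝ) : ℂ))) *
      (z ⬝ᵥ (cpx ((2⁻¹ : ℝ) • (H - Q)) *ᵥ z)))

/-- The fractional linear action `τ_M = (aτ+b)/(cτ+d)`. -/
noncomputable def mobiusAct (M : Matrix (Fin 2) (Fin 2) ℝ) (τ : ℂ) : ℂ :=
  (((M 0 0 : ℝ) : ℂ) * τ + ((M 0 1 : ℝ) : ℂ)) /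
    (((M 1 0 : ℝ) : ℂ) * τ + ((M 1 1 : ℝ) : ℂ))

/-- The induced action on the chemical potentials
`z_{M,τ} = Q⁻¹((1/(cτ+d)) Q_L − (1/(cτ̄+d)) Q_R) z`. -/
noncomputable def zAct (n : ℕ) (Q H : Matrix (Fin n) (Fin n) ℝ)
    (M : Matrix (Fin 2) (Fin 2) ℝ) (τ : ℂ) (z : Fin n → ℂ) : Fin n → ℂ :=
  ((cpx Q)⁻¹ *
    ((((M 1 0 : ℝ) : ℂ) * τ + ((M 1 1 : ℝ) : ℂ))⁻¹ • cpx ((2⁻¹ : ℝ) • (H + Q))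
      - (((M 1 0 : ℝ) : ℂ) * (starRingEnd ℂ τ) + ((M 1 1 : ℝ) : ℂ))⁻¹ •
        cpx ((2⁻¹ : ℝ) • (H - Q)))) *ᵥ z

lemma cpx_mul' {n : ℕ} (A B : Matrix (Fin n) (Fin n) ℝ) : cpx (A*B) = cpx A * cpx B :=
  Matrix.map_mul (f := Complex.ofRealHom)

lemma cpx_one' {n : ℕ} : cpx (n := n) 1 = 1 :=
  Matrix.map_one _ (by simp) (by simp)

lemma cpx_transpose' {n : ℕ} (A : Matrix (Fin n) (Fin n) ℝ) : cpx Aᵀ = (cpx A)ᵀ := by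
  simp only [cpx]; exact Matrix.transpose_map

/-- bilinear form transformation -/
lemma formAux {n : ℕ} (X L R : Matrix (Fin n) (Fin n) ℂ)
    (hL : L*X*L = L) (hR : R*X*R = -R) (hLR : L*X*R = 0) (hRL : R*X*L = 0)
    (hLs : Lᵀ = L) (hRs : Rᵀ = R) (hXs : Xᵀ = X) (α β : ℂ) (z : Fin n → ℂ) :
    ((X*(α•L - β•R)) *ᵥ z) ⬝ᵥ (L *ᵥ ((X*(α•L - β•R)) *ᵥ z)) = (α*α) * (z ⬝ᵥ (L *ᵥ z)) ∧
    ((X*(α•L - β•R)) *ᵥ z) ⬝ᵥ (R *ᵥ ((X*(α•L - β•R)) *ᵥ z)) = (β*β) * (z ⬝ᵥ (R *ᵥ z)) := by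
  have dp : ∀ B : Matrix (Fin n) (Fin n) ℂ, ∀ K : Matrix (Fin n) (Fin n) ℂ,
      (K *ᵥ z) ⬝ᵥ (B *ᵥ (K *ᵥ z)) = z ⬝ᵥ ((Kᵀ * B * K) *ᵥ z) := by
    intro B K
    rw [← mulVec_mulVec, ← mulVec_mulVec, ← vecMul_transpose, ← dotProduct_mulVec]
  have hKT : (X*(α•L - β•R))ᵀ = (α•L - β•R) * X := by
    rw [Matrix.transpose_mul, hXs, Matrix.transpose_sub, Matrix.transpose_smul,
      Matrix.transpose_smul, hLs, hRs]
  have hLK : L * (X*(α•L - β•R)) = α • L := by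
    rw [← Matrix.mul_assoc, Matrix.mul_sub, Matrix.mul_smul, Matrix.mul_smul, hL, hLR,
      smul_zero, sub_zero]
  have hRK : R * (X*(α•L - β•R)) = β • R := by
    rw [← Matrix.mul_assoc, Matrix.mul_sub, Matrix.mul_smul, Matrix.mul_smul, hR, hRL,
      smul_zero, zero_sub, smul_neg, neg_neg]
  have hexp : (α•L - β•R) * X * L = α • L := by
    rw [Matrix.mul_assoc, Matrix.sub_mul, Matrix.smul_mul, Matrix.smul_mul,
      ← Matrix.mul_assoc, ← Matrix.mul_assoc, hL, hRL, smul_zero, sub_zero]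
  have hexpR : (α•L - β•R) * X * R = β • R := by
    rw [Matrix.mul_assoc, Matrix.sub_mul, Matrix.smul_mul, Matrix.smul_mul,
      ← Matrix.mul_assoc, ← Matrix.mul_assoc, hR, hLR, smul_zero, zero_sub, smul_neg, neg_neg]
  have hKLK : (X*(α•L - β•R))ᵀ * L * (X*(α•L - β•R)) = (α*α) • L := by
    rw [Matrix.mul_assoc, hLK, hKT, Matrix.mul_smul, hexp, smul_smul]
  have hKRK : (X*(α•L - β•R))ᵀ * R * (X*(α•L - β•R)) = (β*β) • R := by
    rw [Matrix.mul_assoc, hRK, hKT, Matrix.mul_smul, hexpR, smul_smul]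
  constructor <;> rw [dp] <;> [rw [hKLK]; rw [hKRK]] <;>
    rw [smul_mulVec, dotProduct_smul, smul_eq_mul]

lemma lin_ne_zero (c d : ℝ) (τ : ℂ) (him : τ.im ≠ 0) (h : ¬(c = 0 ∧ d = 0)) :
    (c : ℂ) * τ + (d : ℂ) ≠ 0 := by
  intro h0
  rcases eq_or_ne c 0 with hc | hc
  · subst hc; simp at h0
    exact h ⟨rfl, by exact_mod_cast h0⟩
  · have := congrArg Complex.im h0
    simp [Complex.add_im, Complex.mul_im] at this
    rcases this with h' | h' <;> simp_all

lemma keyScalar (a₁ b₁ c₁ d₁ c₂ d₂ τ : ℂ) (hdet : a₁*d₁ - b₁*c₁ = 1)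
    (hA : c₁*τ+d₁ ≠ 0) (hB : (c₂*a₁+d₂*c₁)*τ + (c₂*b₁+d₂*d₁) ≠ 0) :
    c₁/(c₁*τ+d₁) + (c₂/(c₂*((a₁*τ+b₁)/(c₁*τ+d₁))+d₂)) * ((c₁*τ+d₁)⁻¹ * (c₁*τ+d₁)⁻¹)
      = (c₂*a₁+d₂*c₁)/((c₂*a₁+d₂*c₁)*τ + (c₂*b₁+d₂*d₁)) := by
  have hC' : c₂*((a₁*τ+b₁)/(c₁*τ+d₁))+d₂
      = ((c₂*a₁+d₂*c₁)*τ + (c₂*b₁+d₂*d₁))/(c₁*τ+d₁) := by rw [mul_div_assoc', div_add' _ _ _ hA]; ring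
  have e1 : c₂ / (((c₂*a₁+d₂*c₁)*τ + (c₂*b₁+d₂*d₁))/(c₁*τ+d₁)) * ((c₁*τ+d₁)⁻¹ * (c₁*τ+d₁)⁻¹)
      = c₂ / ((c₁*τ+d₁) * ((c₂*a₁+d₂*c₁)*τ + (c₂*b₁+d₂*d₁))) := by
    rw [div_div_eq_mul_div]; field_simp
  rw [hC', e1, div_add_div _ _ hA (mul_ne_zero hA hB),
    div_eq_div_iff (mul_ne_zero hA (mul_ne_zero hA hB)) hB]
  linear_combination (-(c₂) * ((c₁*τ+d₁) * ((c₂*a₁+d₂*c₁)*τ + (c₂*b₁+d₂*d₁)))) * hdet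

/-- Composition law: `f(M₁;τ,z)·f(M₂;τ_{M₁},z_{M₁,τ}) = f(M₂M₁;τ,z)` for
`M₁, M₂ ∈ SL(2,ℝ)`. -/
theorem stmt_17 (n : ℕ) (Q H : Matrix (Fin n) (Fin n) ℝ)
    (hQsymm : Q.IsSymm) (hQdet : Q.det ≠ 0)
    (hHsymm : H.IsSymm) (hHpos : H.PosDef) (hHQ : H * Q⁻¹ * H = Q)
    (M₁ M₂ : Matrix (Fin 2) (Fin 2) ℝ) (h₁ : M₁.det = 1) (h₂ : M₂.det = 1)
    (τ : ℂ) (hτ : 0 < τ.im) (z : Fin n → ℂ) :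
    chemFactor n Q H M₁ τ z *
      chemFactor n Q H M₂ (mobiusAct M₁ τ) (zAct n Q H M₁ τ z)
      = chemFactor n Q H (M₂ * M₁) τ z := by
  -- matrix identities over ℂ
  have hQu : IsUnit Q.det := isUnit_iff_ne_zero.mpr hQdet
  set X := cpx Q⁻¹ with hXdef
  set L := cpx ((2⁻¹ : ℝ) • (H + Q)) with hLdef
  set R := cpx ((2⁻¹ : ℝ) • (H - Q)) with hRdef
  have hQX : cpx Q * X = 1 := by rw [hXdef, ← cpx_mul', Matrix.mul_nonsing_inv Q hQu, cpx_one']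
  have hXQ : X * cpx Q = 1 := by rw [hXdef, ← cpx_mul', Matrix.nonsing_inv_mul Q hQu, cpx_one']
  have hX : (cpx Q)⁻¹ = X := Matrix.inv_eq_right_inv hQX
  have hHXH : cpx H * X * cpx H = cpx Q := by rw [hXdef, ← cpx_mul', ← cpx_mul', hHQ]
  have hHXQ : cpx H * X * cpx Q = cpx H := by rw [Matrix.mul_assoc, hXQ, Matrix.mul_one]
  have hQXH : cpx Q * X * cpx H = cpx H := by rw [hQX, Matrix.one_mul]
  have hQXQ : cpx Q * X * cpx Q = cpx Q := by rw [hQX, Matrix.one_mul]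
  have hLHQ : L = (2⁻¹ : ℂ) • (cpx H + cpx Q) := by
    rw [hLdef]; ext i j; simp [cpx]; try ring
  have hRHQ : R = (2⁻¹ : ℂ) • (cpx H - cpx Q) := by
    rw [hRdef]; ext i j; simp [cpx]; try ring
  have expLL : (cpx H + cpx Q) * X * (cpx H + cpx Q) = (2:ℂ) • (cpx H + cpx Q) := by
    rw [Matrix.add_mul, Matrix.add_mul, Matrix.mul_add, Matrix.mul_add,
      hHXH, hHXQ, hQXH, hQXQ, two_smul]
    abel
  have expRR : (cpx H - cpx Q) * X * (cpx H - cpx Q) = -((2:ℂ) • (cpx H - cpx Q)) := by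
    rw [Matrix.sub_mul, Matrix.sub_mul, Matrix.mul_sub, Matrix.mul_sub,
      hHXH, hHXQ, hQXH, hQXQ, two_smul]
    abel
  have expLR : (cpx H + cpx Q) * X * (cpx H - cpx Q) = 0 := by
    rw [Matrix.add_mul, Matrix.add_mul, Matrix.mul_sub, Matrix.mul_sub,
      hHXH, hHXQ, hQXH, hQXQ]
    abel
  have expRL : (cpx H - cpx Q) * X * (cpx H + cpx Q) = 0 := by
    rw [Matrix.sub_mul, Matrix.sub_mul, Matrix.mul_add, Matrix.mul_add,
      hHXH, hHXQ, hQXH, hQXQ]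
    abel
  have hsmul3 : ∀ (A B : Matrix (Fin n) (Fin n) ℂ),
      ((2⁻¹:ℂ) • A) * X * ((2⁻¹:ℂ) • B) = ((4:ℂ)⁻¹) • (A * X * B) := by
    intro A B
    rw [Matrix.smul_mul, Matrix.smul_mul, Matrix.mul_smul, smul_smul]
    norm_num
  have hLL : L * X * L = L := by
    rw [hLHQ, hsmul3, expLL, smul_smul]; norm_num
  have hRR : R * X * R = -R := by
    rw [hRHQ, hsmul3, expRR, smul_neg, smul_smul]; norm_num
  have hLR : L * X * R = 0 := by
    rw [hLHQ, hRHQ, hsmul3, expLR, smul_zero]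
  have hRL : R * X * L = 0 := by
    rw [hLHQ, hRHQ, hsmul3, expRL, smul_zero]
  have hLs : Lᵀ = L := by
    rw [hLdef, ← cpx_transpose', Matrix.transpose_smul, Matrix.transpose_add,
      hQsymm.eq, hHsymm.eq]
  have hRs : Rᵀ = R := by
    rw [hRdef, ← cpx_transpose', Matrix.transpose_smul, Matrix.transpose_sub,
      hQsymm.eq, hHsymm.eq]
  have hXs : Xᵀ = X := by
    rw [hXdef, ← cpx_transpose', Matrix.transpose_nonsing_inv, hQsymm.eq]
  -- scalars
  have him : τ.im ≠ 0 := ne_of_gt hτ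
  have himc : (starRingEnd ℂ τ).im ≠ 0 := by
    simp [Complex.conj_im]; exact him
  have hpair1 : ¬(M₁ 1 0 = 0 ∧ M₁ 1 1 = 0) := by
    rintro ⟨hc, hd⟩
    rw [Matrix.det_fin_two, hc, hd] at h₁
    simp at h₁
  have h₃ : (M₂ * M₁).det = 1 := by rw [Matrix.det_mul, h₁, h₂, mul_one]
  have hpair3 : ¬((M₂ * M₁) 1 0 = 0 ∧ (M₂ * M₁) 1 1 = 0) := by
    rintro ⟨hc, hd⟩
    rw [Matrix.det_fin_two, hc, hd] at h₃
    simp at h₃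
  have hA : ((M₁ 1 0 : ℝ) : ℂ) * τ + ((M₁ 1 1 : ℝ) : ℂ) ≠ 0 := lin_ne_zero _ _ _ him hpair1
  have hA' : ((M₁ 1 0 : ℝ) : ℂ) * (starRingEnd ℂ τ) + ((M₁ 1 1 : ℝ) : ℂ) ≠ 0 :=
    lin_ne_zero _ _ _ himc hpair1
  have hB : (((M₂ * M₁) 1 0 : ℝ) : ℂ) * τ + (((M₂ * M₁) 1 1 : ℝ) : ℂ) ≠ 0 :=
    lin_ne_zero _ _ _ him hpair3
  have hB' : (((M₂ * M₁) 1 0 : ℝ) : ℂ) * (starRingEnd ℂ τ) + (((M₂ * M₁) 1 1 : ℝ) : ℂ) ≠ 0 :=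
    lin_ne_zero _ _ _ himc hpair3
  have hc₃ : (((M₂ * M₁) 1 0 : ℝ) : ℂ)
      = (M₂ 1 0 : ℂ) * (M₁ 0 0 : ℂ) + (M₂ 1 1 : ℂ) * (M₁ 1 0 : ℂ) := by
    rw [Matrix.mul_apply, Fin.sum_univ_two]; push_cast; ring
  have hd₃ : (((M₂ * M₁) 1 1 : ℝ) : ℂ)
      = (M₂ 1 0 : ℂ) * (M₁ 0 1 : ℂ) + (M₂ 1 1 : ℂ) * (M₁ 1 1 : ℂ) := by
    rw [Matrix.mul_apply, Fin.sum_univ_two]; push_cast; ring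
  have hdet₁ : (M₁ 0 0 : ℂ) * (M₁ 1 1 : ℂ) - (M₁ 0 1 : ℂ) * (M₁ 1 0 : ℂ) = 1 := by
    rw [Matrix.det_fin_two] at h₁; exact_mod_cast congrArg (Complex.ofReal) h₁
  -- conj of mobius
  have hconjmob : (starRingEnd ℂ) (mobiusAct M₁ τ)
      = (((M₁ 0 0 : ℝ) : ℂ) * (starRingEnd ℂ τ) + ((M₁ 0 1 : ℝ) : ℂ))
      / (((M₁ 1 0 : ℝ) : ℂ) * (starRingEnd ℂ τ) + ((M₁ 1 1 : ℝ) : ℂ)) := by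
    simp [mobiusAct, map_div₀, map_add, _root_.map_mul, Complex.conj_ofReal]
  obtain ⟨fL, fR⟩ := formAux X L R hLL hRR hLR hRL hLs hRs hXs
    (((M₁ 1 0 : ℝ) : ℂ) * τ + ((M₁ 1 1 : ℝ) : ℂ))⁻¹
    (((M₁ 1 0 : ℝ) : ℂ) * (starRingEnd ℂ τ) + ((M₁ 1 1 : ℝ) : ℂ))⁻¹ z
  rw [hc₃, hd₃] at hB hB'
  have k1 := keyScalar (M₁ 0 0 : ℂ) (M₁ 0 1 : ℂ) (M₁ 1 0 : ℂ) (M₁ 1 1 : ℂ)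
    (M₂ 1 0 : ℂ) (M₂ 1 1 : ℂ) τ hdet₁ hA hB
  have k2 := keyScalar (M₁ 0 0 : ℂ) (M₁ 0 1 : ℂ) (M₁ 1 0 : ℂ) (M₁ 1 1 : ℂ)
    (M₂ 1 0 : ℂ) (M₂ 1 1 : ℂ) (starRingEnd ℂ τ) hdet₁ hA' hB'
  unfold chemFactor zAct mobiusAct
  rw [← Complex.exp_add]
  congr 1
  unfold mobiusAct at hconjmob
  rw [hconjmob]
  rw [show (cpx Q)⁻¹ = X from hX]
  simp only [← hLdef, ← hRdef]
  rw [fL, fR, hc₃, hd₃]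
  linear_combination ((Real.pi : ℂ) * Complex.I * (z ⬝ᵥ (L *ᵥ z))) * k1
    - ((Real.pi : ℂ) * Complex.I * (z ⬝ᵥ (R *ᵥ z))) * k2
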